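/- Let D be a directed graph on a vertex set containing distinct vertices u, v, w₁, w₂, whose edges among these vertices are exactly u → w₁, v → w₁, w₁ → w₂, w₂ → u, and w₂ → v (the merge-split gadget replacing the bidirectional edge between u and v in the time-expanded graph). Then every directed path in D that starts in {u, v}, ends in {u, v}, and whose internal vertices lie in {w₁, w₂} traverses the edge (w₁, w₂). Consequently, any family of pairwise edge-disjoint such paths has at most one element, so in an integral flow of unit edge capacities at most one agent can cross between u and v through the gadget in a given time step, and in particular two agents cannot traverse the edge between u and v in opposite directions simultaneously (no head-on collisions). -/

import Mathlib

/-- in the merge-split gadget (internal vertices `w₁`, `w₂`, with edges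
`u → w₁`, `v → w₁`, `w₁ → w₂`, `w₂ → u`, `w₂ → v` being exactly the edges among
`{u, v, w₁, w₂}`), every directed path of positive length starting in `{u, v}`, ending
in `{u, v}`, with all internal vertices in `{w₁, w₂}`, traverses the edge `(w₁, w₂)`.
Consequently any family of pairwise edge-disjoint such paths has at most one element:
at most one agent can cross between `u` and `v` through the gadget in a given time
step, and in particular no two agents can traverse the edge between `u` and `v` in
opposite directions simultaneously. -/
theorem gadget_no_head_on {V : Type*} (E : V → V → Prop) (u v w1 w2 : V)
    (huv : u ≠ v) (huw1 : u ≠ w1) (huw2 : u ≠ w2)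
    (hvw1 : v ≠ w1) (hvw2 : v ≠ w2) (hw12 : w1 ≠ w2)
    (hE : ∀ a b, a ∈ ({u, v, w1, w2} : Set V) → b ∈ ({u, v, w1, w2} : Set V) →
      (E a b ↔ (a = u ∧ b = w1) ∨ (a = v ∧ b = w1) ∨ (a = w1 ∧ b = w2) ∨
        (a = w2 ∧ b = u) ∨ (a = w2 ∧ b = v))) :
    (∀ (n : ℕ) (p : ℕ → V), 0 < n → (∀ i < n, E (p i) (p (i + 1))) →
      p 0 ∈ ({u, v} : Set V) → p n ∈ ({u, v} : Set V) →
      (∀ i, 0 < i → i < n → p i ∈ ({w1, w2} : Set V)) →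
      ∃ i < n, p i = w1 ∧ p (i + 1) = w2) ∧
    (∀ (ι : Type) (n : ι → ℕ) (p : ι → ℕ → V),
      (∀ a : ι, 0 < n a ∧ (∀ i < n a, E (p a i) (p a (i + 1))) ∧
        p a 0 ∈ ({u, v} : Set V) ∧ p a (n a) ∈ ({u, v} : Set V) ∧
        ∀ i, 0 < i → i < n a → p a i ∈ ({w1, w2} : Set V)) →
      (∀ a b : ι, a ≠ b → ∀ i < n a, ∀ j < n b,
        ¬(p a i = p b j ∧ p a (i + 1) = p b (j + 1))) →
      ∀ a b : ι, a = b) := by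
  have key : ∀ (n : ℕ) (p : ℕ → V), 0 < n → (∀ i < n, E (p i) (p (i + 1))) →
      p 0 ∈ ({u, v} : Set V) → p n ∈ ({u, v} : Set V) →
      (∀ i, 0 < i → i < n → p i ∈ ({w1, w2} : Set V)) →
      ∃ i < n, p i = w1 ∧ p (i + 1) = w2 := by
    intro n p hn hedge h0 hend hint
    have h4 : ∀ x, x ∈ ({u, v} : Set V) ∪ ({w1, w2} : Set V) →
        x ∈ ({u, v, w1, w2} : Set V) := by
      intro x hx
      simp only [Set.mem_union, Set.mem_insert_iff, Set.mem_singleton_iff] at hx ⊢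
      tauto
    have h0' : p 0 ∈ ({u, v, w1, w2} : Set V) := h4 _ (Or.inl h0)
    have h1mem : p 1 ∈ ({u, v, w1, w2} : Set V) := by
      rcases eq_or_lt_of_le (by omega : 1 ≤ n) with h | h
      · refine h4 _ (Or.inl ?_); have hn1 : n = 1 := h.symm; rwa [hn1] at hend
      · exact h4 _ (Or.inr (hint 1 one_pos h))
    have e0 := (hE _ _ h0' h1mem).mp (hedge 0 hn)
    simp only [Set.mem_insert_iff, Set.mem_singleton_iff] at h0
    have h1 : p 1 = w1 := by
      rcases h0 with h0 | h0 <;> rcases e0 with ⟨_, h⟩ | ⟨_, h⟩ | ⟨h, _⟩ | ⟨h, _⟩ | ⟨h, _⟩ <;>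
        first | exact h | (exfalso; rw [h0] at h; tauto)
    have hn2 : 1 < n := by
      rcases eq_or_lt_of_le (by omega : 1 ≤ n) with h | h
      · exfalso
        rw [← h] at hend
        rw [h1] at hend
        simp only [Set.mem_insert_iff, Set.mem_singleton_iff] at hend
        tauto
      · exact h
    have h2mem : p 2 ∈ ({u, v, w1, w2} : Set V) := by
      rcases eq_or_lt_of_le (by omega : 2 ≤ n) with h | h
      · refine h4 _ (Or.inl ?_); have hn1 : n = 2 := h.symm; rwa [hn1] at hend
      · exact h4 _ (Or.inr (hint 2 two_pos h))
    have e1 := (hE _ _ (h4 _ (Or.inr (by simp [h1]))) h2mem).mp (hedge 1 hn2)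
    have h2 : p 2 = w2 := by
      rcases e1 with ⟨h, h'⟩ | ⟨h, h'⟩ | ⟨h, h'⟩ | ⟨h, h'⟩ | ⟨h, h'⟩ <;>
        first | exact h' | (exfalso; rw [h1] at h; tauto)
    exact ⟨1, hn2, h1, h2⟩
  refine ⟨key, ?_⟩
  intro ι n p hpaths hdisj a b
  by_contra hab
  obtain ⟨hna, hea, h0a, hna', hia⟩ := hpaths a
  obtain ⟨hnb, heb, h0b, hnb', hib⟩ := hpaths b
  obtain ⟨i, hi, hi1, hi2⟩ := key (n a) (p a) hna hea h0a hna' hia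
  obtain ⟨j, hj, hj1, hj2⟩ := key (n b) (p b) hnb heb h0b hnb' hib
  exact hdisj a b hab i hi j hj ⟨by rw [hi1, hj1], by rw [hi2, hj2]⟩
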